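/- Ptolemy characterization of cocyclicity: let a,b,c,e ∈ ℍ be points that are not collinear, and set Δ₁ := S_ac·S_be − S_ae·S_bc − S_ab·S_ce, Δ₂ := S_ab·S_ce − S_ac·S_be − S_ae·S_bc, Δ₃ := S_ae·S_bc − S_ac·S_be − S_ab·S_ce. Then a,b,c,e are cocyclic if and only if Δ₁ = 0 or Δ₂ = 0 or Δ₃ = 0. -/

import Mathlib

open Real Finset

noncomputable section

/-- Points of `ℝ³`. -/
abbrev V3 : Type := Fin 3 → ℝ

/-- The pseudo-Euclidean scalar product `⟨x,y⟩ = x₀y₀ − x₁y₁ − x₂y₂`. -/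
def pscal (x y : V3) : ℝ := x 0 * y 0 - x 1 * y 1 - x 2 * y 2

/-- The hyperboloid model `ℍ` of the hyperbolic plane. -/
def Hyp : Set V3 := {x | pscal x x = 1 ∧ 0 < x 0}

/-- Inverse hyperbolic cosine. -/
def arcoshR (x : ℝ) : ℝ := Real.log (x + Real.sqrt (x ^ 2 - 1))

/-- Hyperbolic distance `d(a,b) = arcosh ⟨a,b⟩`. -/
def dH (a b : V3) : ℝ := arcoshR (pscal a b)

/-- Determinant of the 3×3 matrix with columns `a`, `b`, `c`. -/
def det3 (a b c : V3) : ℝ :=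
  a 0 * (b 1 * c 2 - b 2 * c 1) - b 0 * (a 1 * c 2 - a 2 * c 1) + c 0 * (a 1 * b 2 - a 2 * b 1)

/-- `S_ab = sinh(d(a,b)/2)`. -/
def SS (a b : V3) : ℝ := Real.sinh (dH a b / 2)

/-- Signed area of the triangle `a b c`. -/
def triArea (a b c : V3) : ℝ :=
  2 * Real.arctan (det3 a b c / (pscal a b + pscal b c + pscal c a + 1))

/-- Signed area of the `n`-gon with vertices `z 1, …, z n`. -/
def polyArea (n : ℕ) (z : ℕ → V3) : ℝ :=
  ∑ k ∈ Finset.Ico 2 n, triArea (z 1) (z k) (z (k + 1))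

/-- Cyclic successor on `{1, …, n}`. -/
def nxt (n k : ℕ) : ℕ := k % n + 1

/-- Oriented convexity of the `n`-gon `z 1, …, z n`. -/
def OrientedConvex (n : ℕ) (z : ℕ → V3) : Prop :=
  ∀ k ∈ Finset.Icc 1 n, ∀ j ∈ Finset.Icc 1 n,
    j ≠ k → j ≠ nxt n k → 0 < det3 (z k) (z (nxt n k)) (z j)

/-- A set of points lies in a common 2-dimensional linear subspace of `ℝ³`. -/
def Collin (s : Set V3) : Prop :=
  ∃ W : Submodule ℝ V3, Module.finrank ℝ W = 2 ∧ ∀ x ∈ s, x ∈ W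

/-- A set of points lies in a common affine plane of `ℝ³` not containing the origin. -/
def Cocyc (s : Set V3) : Prop :=
  ∃ u : V3, ∃ p : ℝ, u ≠ 0 ∧ p ≠ 0 ∧ ∀ x ∈ s, pscal u x = p

/-! ### Auxiliary material -/

/-- The bordered determinant. -/
def bd (a b c e : V3) : ℝ := det3 a b c - det3 a b e + det3 a c e - det3 b c e

/-- The linear functional given by Euclidean pairing with `w`. -/
def lfun (w : V3) : V3 →ₗ[ℝ] ℝ where
  toFun x := w 0 * x 0 + w 1 * x 1 + w 2 * x 2
  map_add' x y := by simp only [Pi.add_apply]; ring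
  map_smul' t x := by simp only [Pi.smul_apply, smul_eq_mul, RingHom.id_apply]; ring

lemma lfun_apply (w x : V3) : lfun w x = w 0 * x 0 + w 1 * x 1 + w 2 * x 2 := rfl

lemma finrank_ker_lfun (w : V3) (hw : lfun w w ≠ 0) :
    Module.finrank ℝ (LinearMap.ker (lfun w)) = 2 := by
  have hsurj : Function.Surjective (lfun w) := by
    intro y
    refine ⟨(y / lfun w w) • w, ?_⟩
    rw [map_smul, smul_eq_mul]
    field_simp
  have hr : LinearMap.range (lfun w) = ⊤ := LinearMap.range_eq_top.2 hsurj
  have h := LinearMap.finrank_range_add_finrank_ker (lfun w)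
  rw [hr] at h
  have h1 : Module.finrank ℝ (⊤ : Submodule ℝ ℝ) = 1 := by
    simp [finrank_top]
  have hV : Module.finrank ℝ V3 = 3 := by
    simp [Module.finrank_pi]
  omega

lemma pscal_ge_one {a b : V3} (ha : a ∈ Hyp) (hb : b ∈ Hyp) : 1 ≤ pscal a b := by
  obtain ⟨ha1, ha0⟩ := ha
  obtain ⟨hb1, hb0⟩ := hb
  simp only [pscal] at *
  nlinarith [sq_nonneg (a 1 - b 1), sq_nonneg (a 2 - b 2), sq_nonneg (a 1 * b 2 - a 2 * b 1),
    mul_pos ha0 hb0, sq_nonneg (a 0 - b 0), sq_nonneg (a 0 * b 0 - 1)]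

lemma cosh_arcosh {x : ℝ} (hx : 1 ≤ x) : Real.cosh (arcoshR x) = x := by
  have h1 : (0:ℝ) ≤ x ^ 2 - 1 := by nlinarith
  have hs : Real.sqrt (x ^ 2 - 1) ^ 2 = x ^ 2 - 1 := Real.sq_sqrt h1
  have hy : 0 < x + Real.sqrt (x ^ 2 - 1) := by
    have := Real.sqrt_nonneg (x ^ 2 - 1); linarith
  rw [arcoshR, Real.cosh_eq, Real.exp_log hy, Real.exp_neg, Real.exp_log hy]
  rw [div_eq_iff (by norm_num : (2:ℝ) ≠ 0)]
  field_simp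
  nlinarith [hs]

lemma arcosh_nonneg {x : ℝ} (hx : 1 ≤ x) : 0 ≤ arcoshR x := by
  have := Real.sqrt_nonneg (x ^ 2 - 1)
  exact Real.log_nonneg (by linarith)

lemma SS_nonneg {a b : V3} (ha : a ∈ Hyp) (hb : b ∈ Hyp) : 0 ≤ SS a b := by
  have h := pscal_ge_one ha hb
  have : (0:ℝ) ≤ dH a b := _root_.arcosh_nonneg h
  exact Real.sinh_nonneg_iff.2 (by linarith)

lemma pscal_SS {a b : V3} (ha : a ∈ Hyp) (hb : b ∈ Hyp) :
    pscal a b = 1 + 2 * SS a b ^ 2 := by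
  have h1 := pscal_ge_one ha hb
  have h2 : Real.cosh (dH a b) = pscal a b := _root_.cosh_arcosh h1
  have h3 : dH a b = 2 * (dH a b / 2) := by ring
  rw [SS, ← h2, h3, Real.cosh_two_mul, Real.cosh_sq]
  ring

lemma bd_sq (a b c e : V3) (s1 s2 s3 s4 s5 s6 : ℝ)
    (haa : pscal a a = 1) (hbb : pscal b b = 1) (hcc : pscal c c = 1) (hee : pscal e e = 1)
    (hab : pscal a b = 1 + 2 * s1 ^ 2) (hac : pscal a c = 1 + 2 * s2 ^ 2)
    (hae : pscal a e = 1 + 2 * s3 ^ 2) (hbc : pscal b c = 1 + 2 * s4 ^ 2)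
    (hbe : pscal b e = 1 + 2 * s5 ^ 2) (hce : pscal c e = 1 + 2 * s6 ^ 2) :
    bd a b c e ^ 2 = -16 * ((s2*s5 + s3*s4 + s1*s6) * (s2*s5 - s3*s4 - s1*s6) *
      (s1*s6 - s2*s5 - s3*s4) * (s3*s4 - s2*s5 - s1*s6)) := by
  have key : bd a b c e ^ 2 = -(
    (pscal a a - 1)*(pscal b b - 1)*(pscal c c - 1)*(pscal e e - 1) - (pscal a a - 1)*(pscal b b - 1)*(pscal c e - 1)*(pscal c e - 1) - (pscal a a - 1)*(pscal b c - 1)*(pscal b c - 1)*(pscal e e - 1) + (pscal a a - 1)*(pscal b c - 1)*(pscal c e - 1)*(pscal b e - 1) + (pscal a a - 1)*(pscal b e - 1)*(pscal b c - 1)*(pscal c e - 1) - (pscal a a - 1)*(pscal b e - 1)*(pscal c c - 1)*(pscal b e - 1) - (pscal a b - 1)*(pscal a b - 1)*(pscal c c - 1)*(pscal e e - 1) + (pscal a b - 1)*(pscal a b - 1)*(pscal c e - 1)*(pscal c e - 1) + (pscal a b - 1)*(pscal b c - 1)*(pscal a c - 1)*(pscal e e - 1) - (pscal a b - 1)*(pscal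 b c - 1)*(pscal c e - 1)*(pscal a e - 1) - (pscal a b - 1)*(pscal b e - 1)*(pscal a c - 1)*(pscal c e - 1) + (pscal a b - 1)*(pscal b e - 1)*(pscal c c - 1)*(pscal a e - 1) + (pscal a c - 1)*(pscal a b - 1)*(pscal b c - 1)*(pscal e e - 1) - (pscal a c - 1)*(pscal a b - 1)*(pscal c e - 1)*(pscal b e - 1) - (pscal a c - 1)*(pscal b b - 1)*(pscal a c - 1)*(pscal e e - 1) + (pscal a c - 1)*(pscal b b - 1)*(pscal c e - 1)*(pscal a e - 1) + (pscal a c - 1)*(pscal b e - 1)*(pscal a c - 1)*(pscal b e - 1) - (pscal a c - 1)*(pscal b e - 1)*(pscal b c - 1)*(pscal a e - 1) - (pscal a e - 1)*(pscal a b - 1)*(pscal b c - 1)*(pscal c e - 1) + (pscal a e - 1)*(pscal a b - 1)*(pscal c c - 1)*(pscal b e - 1) + (pscal a e - 1)*(pscal b b - 1)*(pscal a c - 1)*(pscal c e - 1) - (pscal a e - 1)*(pscal b b - 1)*(pscal c c - 1)*(pscal a e - 1) - (pscal a e - 1)*(pscal b c - 1)*(pscal a c - 1)*(pscal b e - 1)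 + (pscal a e - 1)*(pscal b c - 1)*(pscal b c - 1)*(pscal a e - 1)) := by
    simp only [bd, det3, pscal]
    ring
  rw [haa, hbb, hcc, hee, hab, hac, hae, hbc, hbe, hce] at key
  rw [key]; ring

lemma bd_eq_zero_of_cocyc (a b c e : V3) (h : Cocyc {a, b, c, e}) : bd a b c e = 0 := by
  obtain ⟨u, p, hu, hp, hm⟩ := h
  have hA : pscal u a = p := hm a (by simp)
  have hB : pscal u b = p := hm b (by simp)
  have hC : pscal u c = p := hm c (by simp)
  have hE : pscal u e = p := hm e (by simp)
  have key : det3 b c e * pscal u a - det3 a c e * pscal u b + det3 a b e * pscal u c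
      - det3 a b c * pscal u e = 0 := by
    simp only [det3, pscal]; ring
  rw [hA, hB, hC, hE] at key
  have hpb : p * bd a b c e = 0 := by
    simp only [bd]; linear_combination -key
  exact (mul_eq_zero.mp hpb).resolve_left hp

lemma cocyc_of_det_ne (a b c e : V3) (hd : det3 a b c ≠ 0) (hbd : bd a b c e = 0) :
    Cocyc {a, b, c, e} := by
  set u : V3 := ![(a 1*b 2 - a 1*c 2 - a 2*b 1 + a 2*c 1 + b 1*c 2 - b 2*c 1) / det3 a b c,
    -((- (a 0*b 2) + a 0*c 2 + a 2*b 0 - a 2*c 0 - b 0*c 2 + b 2*c 0) / det3 a b c),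
    -((a 0*b 1 - a 0*c 1 - a 1*b 0 + a 1*c 0 + b 0*c 1 - b 1*c 0) / det3 a b c)] with hu
  have hmem : ∀ x ∈ ({a, b, c, e} : Set V3), pscal u x = 1 := by
    intro x hx
    simp only [Set.mem_insert_iff, Set.mem_singleton_iff] at hx
    simp only [pscal, hu, Matrix.cons_val_zero, Matrix.cons_val_one, Matrix.head_cons,
      Matrix.cons_val_two, Matrix.tail_cons]
    rcases hx with rfl | rfl | rfl | rfl
    · field_simp [hd]; simp only [det3]; ring
    · field_simp [hd]; simp only [det3]; ring
    · field_simp [hd]; simp only [det3]; ring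
    · field_simp [hd]
      simp only [bd, det3] at hbd
      simp only [det3]
      linear_combination -hbd
  refine ⟨u, 1, ?_, one_ne_zero, hmem⟩
  intro h0
  have h := hmem a (by simp)
  rw [h0] at h
  simp [pscal] at h

lemma collin_of_dets (a b c e : V3) (ha0 : a 0 ≠ 0)
    (h1 : det3 a b c = 0) (h2 : det3 a b e = 0) (h3 : det3 a c e = 0) (h4 : det3 b c e = 0) :
    Collin {a, b, c, e} := by
  simp only [det3] at h1 h2 h3 h4
  have main : ∀ w : V3, lfun w w ≠ 0 → lfun w a = 0 → lfun w b = 0 → lfun w c = 0 →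
      lfun w e = 0 → Collin {a, b, c, e} := by
    intro w hw wa wb wc we
    refine ⟨LinearMap.ker (lfun w), finrank_ker_lfun w hw, ?_⟩
    intro x hx
    simp only [Set.mem_insert_iff, Set.mem_singleton_iff] at hx
    rw [LinearMap.mem_ker]
    rcases hx with rfl | rfl | rfl | rfl <;> assumption
  by_cases k1 : a 0 * b 1 - a 1 * b 0 = 0
  · by_cases k2 : a 0 * c 1 - a 1 * c 0 = 0
    · by_cases k3 : a 0 * e 1 - a 1 * e 0 = 0
      · -- all "third components" vanish: use w = (a₁, -a₀, 0)
        refine main ![a 1, -(a 0), 0] ?_ ?_ ?_ ?_ ?_ <;>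
          simp only [lfun_apply, Matrix.cons_val_zero, Matrix.cons_val_one, Matrix.head_cons,
            Matrix.cons_val_two, Matrix.tail_cons]
        · intro h
          have hp : 0 < a 0 * a 0 := mul_self_pos.2 ha0
          nlinarith [mul_self_nonneg (a 1)]
        · ring
        · linear_combination -k1
        · linear_combination -k2
        · linear_combination -k3
      · -- cross a e ≠ 0
        refine main ![a 1 * e 2 - a 2 * e 1, a 2 * e 0 - a 0 * e 2, a 0 * e 1 - a 1 * e 0]
          ?_ ?_ ?_ ?_ ?_ <;>
          simp only [lfun_apply, Matrix.cons_val_zero, Matrix.cons_val_one, Matrix.head_cons,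
            Matrix.cons_val_two, Matrix.tail_cons]
        · intro h
          have hp : 0 < (a 0 * e 1 - a 1 * e 0) * (a 0 * e 1 - a 1 * e 0) := mul_self_pos.2 k3
          nlinarith [mul_self_nonneg (a 1 * e 2 - a 2 * e 1), mul_self_nonneg (a 2 * e 0 - a 0 * e 2)]
        · ring
        · linear_combination -h2
        · linear_combination -h3
        · ring
    · -- cross a c ≠ 0
      refine main ![a 1 * c 2 - a 2 * c 1, a 2 * c 0 - a 0 * c 2, a 0 * c 1 - a 1 * c 0]
        ?_ ?_ ?_ ?_ ?_ <;>
        simp only [lfun_apply, Matrix.cons_val_zero, Matrix.cons_val_one, Matrix.head_cons,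
          Matrix.cons_val_two, Matrix.tail_cons]
      · intro h
        have hp : 0 < (a 0 * c 1 - a 1 * c 0) * (a 0 * c 1 - a 1 * c 0) := mul_self_pos.2 k2
        nlinarith [mul_self_nonneg (a 1 * c 2 - a 2 * c 1), mul_self_nonneg (a 2 * c 0 - a 0 * c 2)]
      · ring
      · linear_combination -h1
      · ring
      · linear_combination h3
  · -- cross a b ≠ 0
    refine main ![a 1 * b 2 - a 2 * b 1, a 2 * b 0 - a 0 * b 2, a 0 * b 1 - a 1 * b 0]
      ?_ ?_ ?_ ?_ ?_ <;>
      simp only [lfun_apply, Matrix.cons_val_zero, Matrix.cons_val_one, Matrix.head_cons,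
        Matrix.cons_val_two, Matrix.tail_cons]
    · intro h
      have hp : 0 < (a 0 * b 1 - a 1 * b 0) * (a 0 * b 1 - a 1 * b 0) := mul_self_pos.2 k1
      nlinarith [mul_self_nonneg (a 1 * b 2 - a 2 * b 1), mul_self_nonneg (a 2 * b 0 - a 0 * b 2)]
    · ring
    · ring
    · linear_combination h1
    · linear_combination h2

lemma cocyc_of_bd (a b c e : V3) (hnc : ¬ Collin {a, b, c, e}) (ha0 : a 0 ≠ 0)
    (hbd : bd a b c e = 0) : Cocyc {a, b, c, e} := by
  have hsome : det3 a b c ≠ 0 ∨ det3 a b e ≠ 0 ∨ det3 a c e ≠ 0 ∨ det3 b c e ≠ 0 := by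
    by_contra h
    push_neg at h
    exact hnc (collin_of_dets a b c e ha0 h.1 h.2.1 h.2.2.1 h.2.2.2)
  rcases hsome with h | h | h | h
  · exact cocyc_of_det_ne a b c e h hbd
  · have hb2 : bd a b e c = 0 := by
      simp only [bd, det3] at hbd ⊢; linear_combination -hbd
    have := cocyc_of_det_ne a b e c h hb2
    have hset : ({a, b, e, c} : Set V3) = {a, b, c, e} := by
      ext x; simp only [Set.mem_insert_iff, Set.mem_singleton_iff]; tauto
    rwa [hset] at this
  · have hb2 : bd a c e b = 0 := by
      simp only [bd, det3] at hbd ⊢; linear_combination hbd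
    have := cocyc_of_det_ne a c e b h hb2
    have hset : ({a, c, e, b} : Set V3) = {a, b, c, e} := by
      ext x; simp only [Set.mem_insert_iff, Set.mem_singleton_iff]; tauto
    rwa [hset] at this
  · have hb2 : bd b c e a = 0 := by
      simp only [bd, det3] at hbd ⊢; linear_combination -hbd
    have := cocyc_of_det_ne b c e a h hb2
    have hset : ({b, c, e, a} : Set V3) = {a, b, c, e} := by
      ext x; simp only [Set.mem_insert_iff, Set.mem_singleton_iff]; tauto
    rwa [hset] at this

/-- Corollary 3.5 (Ptolemy characterization of cocyclicity): four non-collinear points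
of `ℍ` are cocyclic iff one of the Ptolemy expressions vanishes. -/
theorem ptolemy_cocyclic (a b c e : V3)
    (ha : a ∈ Hyp) (hb : b ∈ Hyp) (hc : c ∈ Hyp) (he : e ∈ Hyp)
    (hnc : ¬ Collin {a, b, c, e}) :
    Cocyc {a, b, c, e} ↔
      (SS a c * SS b e - SS a e * SS b c - SS a b * SS c e = 0 ∨
       SS a b * SS c e - SS a c * SS b e - SS a e * SS b c = 0 ∨
       SS a e * SS b c - SS a c * SS b e - SS a b * SS c e = 0) := by
  have hsq : bd a b c e ^ 2 = -16 * ((SS a c * SS b e + SS a e * SS b c + SS a b * SS c e) *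
      (SS a c * SS b e - SS a e * SS b c - SS a b * SS c e) *
      (SS a b * SS c e - SS a c * SS b e - SS a e * SS b c) *
      (SS a e * SS b c - SS a c * SS b e - SS a b * SS c e)) :=
    bd_sq a b c e (SS a b) (SS a c) (SS a e) (SS b c) (SS b e) (SS c e)
      ha.1 hb.1 hc.1 he.1
      (pscal_SS ha hb) (pscal_SS ha hc) (pscal_SS ha he)
      (pscal_SS hb hc) (pscal_SS hb he) (pscal_SS hc he)
  constructor
  · intro hco
    have hbd := bd_eq_zero_of_cocyc a b c e hco
    rw [hbd] at hsq
    have hX : (SS a c * SS b e + SS a e * SS b c + SS a b * SS c e) *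
        (SS a c * SS b e - SS a e * SS b c - SS a b * SS c e) *
        (SS a b * SS c e - SS a c * SS b e - SS a e * SS b c) *
        (SS a e * SS b c - SS a c * SS b e - SS a b * SS c e) = 0 := by
      linear_combination (1/16 : ℝ) * hsq
    rcases mul_eq_zero.mp hX with h | h
    · rcases mul_eq_zero.mp h with h' | h'
      · rcases mul_eq_zero.mp h' with h'' | h''
        · -- sum of nonneg products is zero
          have q1 : 0 ≤ SS a c * SS b e := mul_nonneg (SS_nonneg ha hc) (SS_nonneg hb he)
          have q2 : 0 ≤ SS a e * SS b c := mul_nonneg (SS_nonneg ha he) (SS_nonneg hb hc)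
          have q3 : 0 ≤ SS a b * SS c e := mul_nonneg (SS_nonneg ha hb) (SS_nonneg hc he)
          left; linarith
        · left; exact h''
      · right; left; exact h'
    · right; right; exact h
  · intro hdisj
    have hz : bd a b c e ^ 2 = 0 := by
      rw [hsq]
      rcases hdisj with h | h | h <;> rw [h] <;> ring
    have hbd : bd a b c e = 0 := by
      exact pow_eq_zero_iff (two_ne_zero) |>.mp hz
    exact cocyc_of_bd a b c e hnc (ne_of_gt ha.2) hbd
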